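/- Let D be a defeasible theory, let ⟨T_{D,WF}, F_{D,WF}⟩ be its well-founded model under NDL, and let λ be the closure ordinal of the sequence X_D↑0, X_D↑1, … (the least λ with X_D↑λ = X_D↑(λ+1)). Then ⟨T_{D,WF}, F_{D,WF}⟩ = ⟨X_D↑λ, Lit(D) − β_D(X_D↑λ)⟩. -/

import Mathlib

namespace DLWFS

universe u

/-- Ground literals over a type `A` of atoms: atoms and their classical complements. -/
inductive Lit (A : Type u) : Type u where
  | pos : A → Lit A
  | neg : A → Lit A

/-- The classical complement `p̄` of a literal `p`. -/
def Lit.compl {A : Type u} : Lit A → Lit A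
  | .pos a => .neg a
  | .neg a => .pos a

/-- The three kinds of rules of a defeasible theory. -/
inductive RuleKind : Type where
  | strict
  | defeasible
  | defeater
deriving DecidableEq

/-- A rule of a defeasible theory: a kind, a body (a set of literals) and a head literal. -/
structure DRule (A : Type u) where
  kind : RuleKind
  body : Set (Lit A)
  head : Lit A

/-- A defeasible theory `D = ⟨R, C, ≺⟩`. -/
structure DTheory (A : Type u) where
  rules : Set (DRule A)
  conflicts : Set (Set (Lit A))
  prec : DRule A → DRule A → Prop

namespace DTheory

variable {A : Type u}

/-- The strict rules `R_s`. -/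
def Rs (D : DTheory A) : Set (DRule A) := {r ∈ D.rules | r.kind = RuleKind.strict}

/-- The defeasible rules `R_d`. -/
def Rd (D : DTheory A) : Set (DRule A) := {r ∈ D.rules | r.kind = RuleKind.defeasible}

/-- The defeater rules `R_u`. -/
def Ru (D : DTheory A) : Set (DRule A) := {r ∈ D.rules | r.kind = RuleKind.defeater}

/-- `C[p]`: the conflict sets containing literal `p`. -/
def Cset (D : DTheory A) (p : Lit A) : Set (Set (Lit A)) := {c ∈ D.conflicts | p ∈ c}

/-- Structural conditions in the definition of a defeasible theory: a countable set of
rules with finite bodies, a countable set of finite conflict sets containing every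
minimal conflict set `{p, ¬p}`, and an acyclic priority relation over non-strict rules. -/
def WellFormed (D : DTheory A) : Prop :=
  D.rules.Countable ∧ D.conflicts.Countable ∧
  (∀ r ∈ D.rules, r.body.Finite) ∧
  (∀ c ∈ D.conflicts, c.Finite) ∧
  (∀ p : A, ({Lit.pos p, Lit.neg p} : Set (Lit A)) ∈ D.conflicts) ∧
  (∀ r s, D.prec r s → r.kind ≠ RuleKind.strict ∧ s.kind ≠ RuleKind.strict) ∧
  (∀ r, ¬ Relation.TransGen D.prec r r)

/-- `C = C_MIN`: the conflict sets are exactly the minimal ones `{p, ¬p}`. -/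
def MinimalConflicts (D : DTheory A) : Prop :=
  D.conflicts = {c | ∃ p : A, c = ({Lit.pos p, Lit.neg p} : Set (Lit A))}

end DTheory

/-- A 3-valued interpretation: a pair `⟨T, F⟩` of sets. -/
abbrev Interp (L : Type u) : Type u := Set L × Set L

variable {A : Type u}

/-- `S` is ADL-unfounded with respect to theory `D` and interpretation `I = ⟨T, F⟩`. -/
def ADLUnfounded (D : DTheory A) (I : Interp (Lit A)) (S : Set (Lit A)) : Prop :=
  ∀ p ∈ S,
    (∀ r ∈ D.Rs, r.head = p → (r.body ∩ (I.2 ∪ S)).Nonempty) ∧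
    (∀ r ∈ D.Rd, r.head = p →
      (r.body ∩ (I.2 ∪ S)).Nonempty ∨
      ∃ c ∈ D.conflicts, p ∈ c ∧
        ∀ q ∈ c \ {p}, ∃ s ∈ D.rules, s.head = q ∧ s.body ⊆ I.1 ∧
          (D.prec r s ∨ s.kind = RuleKind.strict))

/-- `S` is NDL-unfounded with respect to theory `D` and interpretation `I = ⟨T, F⟩`. -/
def NDLUnfounded (D : DTheory A) (I : Interp (Lit A)) (S : Set (Lit A)) : Prop :=
  ∀ p ∈ S,
    (∀ r ∈ D.Rs, r.head = p → (r.body ∩ (I.2 ∪ S)).Nonempty) ∧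
    (∀ r ∈ D.Rd, r.head = p →
      (r.body ∩ (I.2 ∪ S)).Nonempty ∨
      ∃ c ∈ D.conflicts, p ∈ c ∧
        ∀ q ∈ c \ {p}, ∃ s ∈ D.rules, s.head = q ∧ s.body ⊆ I.1 ∧
          ¬ D.prec s r)

/-- `U_D(I)` for ADL: the union of all ADL-unfounded sets. -/
def UA (D : DTheory A) (I : Interp (Lit A)) : Set (Lit A) :=
  ⋃₀ {S | ADLUnfounded D I S}

/-- `U_D(I)` for NDL: the union of all NDL-unfounded sets. -/
def UN (D : DTheory A) (I : Interp (Lit A)) : Set (Lit A) :=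
  ⋃₀ {S | NDLUnfounded D I S}

/-- `T_D(I)`: the literals having a witness of provability with respect to `I = ⟨T, F⟩`. -/
def TD (D : DTheory A) (I : Interp (Lit A)) : Set (Lit A) :=
  {p | ∃ r ∈ D.rules, r.head = p ∧ r.body ⊆ I.1 ∧
    (r.kind = RuleKind.strict ∨
      (r.kind = RuleKind.defeasible ∧
        ∀ c ∈ D.conflicts, p ∈ c →
          ∃ q ∈ c \ {p}, ∀ s ∈ D.rules, s.head = q →
            (D.prec s r ∨ (s.body ∩ I.2).Nonempty)))}

/-- `W_D` for ADL. -/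
def WA (D : DTheory A) (I : Interp (Lit A)) : Interp (Lit A) := (TD D I, UA D I)

/-- `W_D` for NDL. -/
def WN (D : DTheory A) (I : Interp (Lit A)) : Interp (Lit A) := (TD D I, UN D I)

/-- `I` is the well-founded model for the operator `W`: the least fixpoint of `W`
(componentwise order). -/
def IsWFModel {L : Type u} (W : Interp L → Interp L) (I : Interp L) : Prop :=
  W I = I ∧ ∀ J, W J = J → I.1 ⊆ J.1 ∧ I.2 ⊆ J.2

/-- A rule of a normal logic program: `head ← pos, ∼neg`. -/
structure NRule (A : Type u) where
  head : A
  pos : Set A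
  neg : Set A

/-- A normal logic program: a set of rules. -/
abbrev NProgram (A : Type u) : Type u := Set (NRule A)

/-- Structural conditions in the definition of a normal logic program: a countable
set of ground rules with finite bodies. -/
def NProgram.WellFormed (P : NProgram A) : Prop :=
  P.Countable ∧ ∀ r ∈ P, r.pos.Finite ∧ r.neg.Finite

/-- The immediate consequence operator `T_Π` on 3-valued interpretations. -/
def TP (P : NProgram A) (I : Interp A) : Set A :=
  {a | ∃ r ∈ P, r.head = a ∧ r.pos ⊆ I.1 ∧ r.neg ⊆ I.2}

/-- `S` is an unfounded set of program `P` with respect to interpretation `I = ⟨T, F⟩`. -/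
def PUnfounded (P : NProgram A) (I : Interp A) (S : Set A) : Prop :=
  ∀ p ∈ S, ∀ r ∈ P, r.head = p →
    (r.pos ∩ (I.2 ∪ S)).Nonempty ∨ (r.neg ∩ I.1).Nonempty

/-- `U_Π(I)`: the greatest unfounded set (union of all unfounded sets). -/
def UP (P : NProgram A) (I : Interp A) : Set A :=
  ⋃₀ {S | PUnfounded P I S}

/-- `W_Π(I) = ⟨T_Π(I), U_Π(I)⟩`. -/
def WP (P : NProgram A) (I : Interp A) : Interp A := (TP P I, UP P I)

/-- Transfinite iteration of an operator `W` from `⊥`, taking suprema at limit ordinals. -/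
noncomputable def iterW {α : Type*} [CompleteLattice α] (W : α → α) : Ordinal.{0} → α :=
  fun o =>
    Ordinal.limitRecOn (motive := fun _ => α) o ⊥ (fun _ ih => W ih)
      (fun o' _ ih => ⨆ x : Set.Iio o', ih x.1 x.2)

/-- One step of the immediate consequence operator for a set of defeasible-theory rules. -/
def TRstep (R : Set (DRule A)) (S : Set (Lit A)) : Set (Lit A) :=
  {p | ∃ r ∈ R, r.head = p ∧ r.body ⊆ S}

/-- The finite iterates `T_R ↑ n`. -/
def TRiter (R : Set (DRule A)) : ℕ → Set (Lit A)
  | 0 => ∅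
  | n + 1 => TRstep R (TRiter R n)

/-- `Cl(R) = T_R ↑ ω`. -/
def ClR (R : Set (DRule A)) : Set (Lit A) := ⋃ n, TRiter R n

/-- The `α`-reduct `D_α^S` of a defeasible theory. -/
def alphaReduct (D : DTheory A) (S : Set (Lit A)) : Set (DRule A) :=
  D.Rs ∪ {r ∈ D.Rd | ∀ c ∈ D.conflicts, r.head ∈ c → ∃ q ∈ c \ {r.head}, q ∉ S}

/-- The ambiguity-propagating operator `α_D(S) = Cl(D_α^S)`. -/
def alphaOp (D : DTheory A) (S : Set (Lit A)) : Set (Lit A) := ClR (alphaReduct D S)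

/-- The `β`-reduct `D_β^S` of a defeasible theory. -/
def betaReduct (D : DTheory A) (S : Set (Lit A)) : Set (DRule A) :=
  D.Rs ∪ {r ∈ D.Rd | ∀ c ∈ D.conflicts, r.head ∈ c →
    ∃ q ∈ c \ {r.head}, ∀ s ∈ D.rules, s.head = q → (¬ s.body ⊆ S ∨ D.prec s r)}

/-- The ambiguity-blocking operator `β_D(S) = Cl(D_β^S)`. -/
def betaOp (D : DTheory A) (S : Set (Lit A)) : Set (Lit A) := ClR (betaReduct D S)

/-- `S` is an `α`-stable set of `D`. -/
def AlphaStable (D : DTheory A) (S : Set (Lit A)) : Prop := alphaOp D S = S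

/-- `S` is a `β`-stable set of `D`. -/
def BetaStable (D : DTheory A) (S : Set (Lit A)) : Prop := betaOp D S = S

/-- The sequence `X_D↑λ`: `X↑0 = ∅`, `X↑(λ+1) = β_D(β_D(X↑λ))`, unions at limits. -/
noncomputable def Xseq (D : DTheory A) : Ordinal.{0} → Set (Lit A) :=
  iterW (fun S => betaOp D (betaOp D S))

/-- The Gelfond–Lifschitz reduct `Π^S`. -/
def glReduct (P : NProgram A) (S : Set A) : NProgram A :=
  {r' | ∃ r ∈ P, r.neg ∩ S = ∅ ∧ r' = NRule.mk r.head r.pos ∅}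

/-- One step of the immediate consequence operator for a NAF-free program. -/
def TPstep (P : NProgram A) (S : Set A) : Set A :=
  {a | ∃ r ∈ P, r.head = a ∧ r.pos ⊆ S}

/-- The finite iterates `T_Π ↑ n` of a NAF-free program. -/
def TPiter (P : NProgram A) : ℕ → Set A
  | 0 => ∅
  | n + 1 => TPstep P (TPiter P n)

/-- `Cl(Π) = T_Π ↑ ω`. -/
def ClP (P : NProgram A) : Set A := ⋃ n, TPiter P n

/-- The Gelfond–Lifschitz operator `γ_Π(S) = Cl(Π^S)`. -/
def gamma (P : NProgram A) (S : Set A) : Set A := ClP (glReduct P S)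

/-- `S` is a stable model of `P`. -/
def StableModel (P : NProgram A) (S : Set A) : Prop := gamma P S = S

/-- `Prod(C[p])`: all sets obtained by choosing one literal other than `p` from each
conflict set containing `p`. -/
def ProdC (D : DTheory A) (p : Lit A) : Set (Set (Lit A)) :=
  {Q | ∃ f : Set (Lit A) → Lit A,
    (∀ c ∈ D.conflicts, p ∈ c → f c ∈ c \ {p}) ∧
    Q = f '' {c ∈ D.conflicts | p ∈ c}}

/-- The logic program translation `Π_D` of a defeasible theory `D` (negative literals
are treated as fresh atoms, so the atoms of the program are the literals of `D`). -/
def lpTrans (D : DTheory A) : NProgram (Lit A) :=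
  {r' | ∃ r ∈ D.Rs, r' = NRule.mk r.head r.body ∅} ∪
  {r' | ∃ r ∈ D.Rd, ∃ Q ∈ ProdC D r.head, r' = NRule.mk r.head r.body Q}

/-- The explicit version `Φ` of a normal program `Π`: atoms of `Φ` are the literals
over the atoms of `Π` (`¬p` being a fresh atom). -/
def explicitVer (P : NProgram A) : NProgram (Lit A) :=
  {r' | ∃ r ∈ P, r' = NRule.mk (Lit.pos r.head) (Lit.pos '' r.pos ∪ Lit.neg '' r.neg) ∅} ∪
  {r' | ∃ p : A, r' = NRule.mk (Lit.neg p) ∅ {Lit.pos p}}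

/-- The minimal conflict sets over atom type `A`. -/
def CMin (A : Type u) : Set (Set (Lit A)) :=
  {c | ∃ p : A, c = ({Lit.pos p, Lit.neg p} : Set (Lit A))}

/-- The defeasible theory translation `D_Π` of a normal program `Π`: each program rule
becomes a strict rule (default literals `∼b` becoming negative literals `¬b`), and each
atom `p` yields a presumption `∅ ⇒ ¬p`; conflict sets are minimal and `≺` is empty. -/
def dtTrans (P : NProgram A) : DTheory A :=
  { rules :=
      {e | ∃ r ∈ P, e = DRule.mk RuleKind.strict
            (Lit.pos '' r.pos ∪ Lit.neg '' r.neg) (Lit.pos r.head)} ∪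
      {e | ∃ p : A, e = DRule.mk RuleKind.defeasible ∅ (Lit.neg p)}
    conflicts := CMin A
    prec := fun _ _ => False }

/-- `M^¬ = M ∪ {¬p : p ∉ M}`, atoms being identified with positive literals. -/
def negCompl (M : Set A) : Set (Lit A) :=
  Lit.pos '' M ∪ Lit.neg '' {p | p ∉ M}

end DLWFS

namespace DLWFS

section Aux

variable {A : Type*}

lemma TRstep_mono {R R' : Set (DRule A)} {S S' : Set (Lit A)} (hR : R ⊆ R') (hS : S ⊆ S') :
    TRstep R S ⊆ TRstep R' S' := by
  rintro p ⟨r, hr, hh, hb⟩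
  exact ⟨r, hR hr, hh, hb.trans hS⟩

lemma TRiter_mono_R {R R' : Set (DRule A)} (hR : R ⊆ R') (n : ℕ) :
    TRiter R n ⊆ TRiter R' n := by
  induction n with
  | zero => exact subset_rfl
  | succ n ih => exact TRstep_mono hR ih

lemma TRiter_succ_mono (R : Set (DRule A)) (n : ℕ) : TRiter R n ⊆ TRiter R (n + 1) := by
  induction n with
  | zero => exact Set.empty_subset _
  | succ n ih => exact TRstep_mono subset_rfl ih

lemma TRiter_monotone (R : Set (DRule A)) : Monotone (TRiter R) :=
  monotone_nat_of_le_succ (TRiter_succ_mono R)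

lemma TRiter_le_ClR (R : Set (DRule A)) (n : ℕ) : TRiter R n ⊆ ClR R :=
  Set.subset_iUnion (TRiter R) n

lemma ClR_mono {R R' : Set (DRule A)} (hR : R ⊆ R') : ClR R ⊆ ClR R' :=
  Set.iUnion_mono fun n => TRiter_mono_R hR n

lemma ClR_le_closed {R : Set (DRule A)} {V : Set (Lit A)} (h : TRstep R V ⊆ V) :
    ClR R ⊆ V := by
  refine Set.iUnion_subset fun n => ?_
  induction n with
  | zero => exact Set.empty_subset _
  | succ n ih => exact (TRstep_mono subset_rfl ih).trans h

lemma finite_subset_iUnion {α : Type*} {f : ℕ → Set α} (hf : Monotone f)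
    {s : Set α} (hs : s.Finite) (h : s ⊆ ⋃ n, f n) : ∃ n, s ⊆ f n := by
  classical
  have hex : ∀ x : α, ∃ n, x ∈ s → x ∈ f n := by
    intro x
    by_cases hx : x ∈ s
    · obtain ⟨n, hn⟩ := Set.mem_iUnion.1 (h hx)
      exact ⟨n, fun _ => hn⟩
    · exact ⟨0, fun hc => absurd hc hx⟩
  choose g hg using hex
  obtain ⟨N, hN⟩ := (hs.image g).bddAbove
  exact ⟨N, fun x hx => hf (hN (Set.mem_image_of_mem g hx)) (hg x hx)⟩

lemma ClR_closed {R : Set (DRule A)} (hfin : ∀ r ∈ R, r.body.Finite) :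
    TRstep R (ClR R) ⊆ ClR R := by
  rintro p ⟨r, hr, hh, hb⟩
  obtain ⟨n, hn⟩ := finite_subset_iUnion (TRiter_monotone R) (hfin r hr) hb
  exact TRiter_le_ClR R (n + 1) ⟨r, hr, hh, hn⟩

lemma ClR_fixed {R : Set (DRule A)} (hfin : ∀ r ∈ R, r.body.Finite) :
    TRstep R (ClR R) = ClR R := by
  refine Set.Subset.antisymm (ClR_closed hfin) ?_
  rintro p hp
  obtain ⟨n, hn⟩ := Set.mem_iUnion.1 hp
  cases n with
  | zero => exact absurd hn (Set.notMem_empty p)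
  | succ n =>
    obtain ⟨r, hr, hh, hb⟩ := hn
    exact ⟨r, hr, hh, hb.trans (TRiter_le_ClR R n)⟩

lemma betaReduct_subset_rules (D : DTheory A) (S : Set (Lit A)) :
    betaReduct D S ⊆ D.rules := by
  rintro r (hr | ⟨hr, _⟩)
  · exact hr.1
  · exact hr.1

lemma betaReduct_antitone (D : DTheory A) {S S' : Set (Lit A)} (h : S ⊆ S') :
    betaReduct D S' ⊆ betaReduct D S := by
  rintro r (hr | ⟨hr, hc⟩)
  · exact Or.inl hr
  · refine Or.inr ⟨hr, fun c hc' hhc => ?_⟩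
    obtain ⟨q, hq, hall⟩ := hc c hc' hhc
    exact ⟨q, hq, fun s hs hsq =>
      (hall s hs hsq).imp (fun hn hsub => hn (hsub.trans h)) id⟩

lemma betaOp_antitone (D : DTheory A) {S S' : Set (Lit A)} (h : S ⊆ S') :
    betaOp D S' ⊆ betaOp D S :=
  ClR_mono (betaReduct_antitone D h)

lemma TD_eq (D : DTheory A) (T F : Set (Lit A)) :
    TD D (T, F) = TRstep (betaReduct D (Set.univ \ F)) T := by
  classical
  ext p
  constructor
  · rintro ⟨r, hr, hh, hb, hk⟩
    subst hh
    rcases hk with hs | ⟨hd, hcond⟩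
    · exact ⟨r, Or.inl ⟨hr, hs⟩, rfl, hb⟩
    · refine ⟨r, Or.inr ⟨⟨hr, hd⟩, ?_⟩, rfl, hb⟩
      intro c hc hpc
      obtain ⟨q, hq, hall⟩ := hcond c hc hpc
      refine ⟨q, hq, fun s hs hsq => ?_⟩
      rcases hall s hs hsq with h | ⟨x, hx1, hx2⟩
      · exact Or.inr h
      · exact Or.inl fun hsub => (hsub hx1).2 hx2
  · rintro ⟨r, hr, hh, hb⟩
    subst hh
    rcases hr with ⟨hr, hs⟩ | ⟨⟨hr, hd⟩, hcond⟩
    · exact ⟨r, hr, rfl, hb, Or.inl hs⟩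
    · refine ⟨r, hr, rfl, hb, Or.inr ⟨hd, fun c hc hpc => ?_⟩⟩
      obtain ⟨q, hq, hall⟩ := hcond c hc hpc
      refine ⟨q, hq, fun s hs hsq => ?_⟩
      rcases hall s hs hsq with hn | hp
      · obtain ⟨x, hx1, hx2⟩ := Set.not_subset.1 hn
        right
        refine ⟨x, hx1, ?_⟩
        by_contra hxF
        exact hx2 ⟨trivial, hxF⟩
      · exact Or.inl hp

/-- The complement of `β_D(I.1)` is NDL-unfounded with respect to `I`. -/
lemma compl_betaOp_unfounded (D : DTheory A) (hfin : ∀ r ∈ D.rules, r.body.Finite)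
    (I : Interp (Lit A)) : NDLUnfounded D I (Set.univ \ betaOp D I.1) := by
  classical
  have hclosed : TRstep (betaReduct D I.1) (betaOp D I.1) ⊆ betaOp D I.1 :=
    ClR_closed fun r hr => hfin r (betaReduct_subset_rules D _ hr)
  intro p hp
  have hpnot : p ∉ betaOp D I.1 := hp.2
  have hbody : ∀ r, r ∈ betaReduct D I.1 → r.head = p →
      (r.body ∩ (I.2 ∪ Set.univ \ betaOp D I.1)).Nonempty := by
    intro r hr hh
    by_contra hne
    have hsub : r.body ⊆ betaOp D I.1 := by
      intro x hx
      by_contra hxn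
      exact hne ⟨x, hx, Or.inr ⟨trivial, hxn⟩⟩
    exact hpnot (hh ▸ hclosed ⟨r, hr, rfl, hsub⟩)
  constructor
  · intro r hr hh
    exact hbody r (Or.inl hr) hh
  · intro r hr hh
    by_cases hdef : ∃ c ∈ D.conflicts, p ∈ c ∧
        ∀ q ∈ c \ {p}, ∃ s ∈ D.rules, s.head = q ∧ s.body ⊆ I.1 ∧ ¬ D.prec s r
    · exact Or.inr hdef
    · push_neg at hdef
      refine Or.inl (hbody r (Or.inr ⟨hr, fun c hc hhc => ?_⟩) hh)
      rw [hh] at hhc ⊢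
      obtain ⟨q, hq, hall⟩ := hdef c hc hhc
      refine ⟨q, hq, fun s hs hsq => ?_⟩
      by_cases hb : s.body ⊆ I.1
      · exact Or.inr (hall s hs hsq hb)
      · exact Or.inl hb

lemma UN_unfounded (D : DTheory A) (I : Interp (Lit A)) : NDLUnfounded D I (UN D I) := by
  intro p hp
  obtain ⟨S, hS, hpS⟩ := hp
  have h := hS p hpS
  constructor
  · intro r hr hh
    obtain ⟨x, hx1, hx2⟩ := h.1 r hr hh
    exact ⟨x, hx1, hx2.imp id fun hxS => ⟨S, hS, hxS⟩⟩
  · intro r hr hh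
    rcases h.2 r hr hh with ⟨x, hx1, hx2⟩ | hdef
    · exact Or.inl ⟨x, hx1, hx2.imp id fun hxS => ⟨S, hS, hxS⟩⟩
    · exact Or.inr hdef

lemma Xseq_zero (D : DTheory A) : Xseq D 0 = ∅ := by
  rw [Xseq, iterW, Ordinal.limitRecOn_zero]
  rfl

lemma Xseq_succ (D : DTheory A) (o : Ordinal) :
    Xseq D (o + 1) = betaOp D (betaOp D (Xseq D o)) := by
  rw [Xseq, iterW, Ordinal.add_one_eq_succ, Ordinal.limitRecOn_succ]
  rfl

lemma Xseq_limit (D : DTheory A) {o : Ordinal} (ho : Order.IsSuccLimit o) :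
    Xseq D o = ⋃ x : Set.Iio o, Xseq D x.1 := by
  rw [Xseq, iterW, Ordinal.limitRecOn_limit (h := ho)]
  rfl

end Aux

/-- Let `D` be a defeasible theory, `⟨T_WF, F_WF⟩` its well-founded model under NDL, and
`λ` the closure ordinal of the sequence `X_D↑0, X_D↑1, …` (the least `λ` with
`X_D↑λ = X_D↑(λ+1)`). Then `⟨T_WF, F_WF⟩ = ⟨X_D↑λ, Lit(D) − β_D(X_D↑λ)⟩`. -/
theorem ndl_wfm_eq_beta_fixpoint {A : Type*} (D : DTheory A) (hwf : D.WellFormed)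
    (I : Interp (Lit A)) (hI : IsWFModel (WN D) I)
    (lam : Ordinal) (hlam : IsLeast {o : Ordinal | Xseq D o = Xseq D (o + 1)} lam) :
    I = (Xseq D lam, Set.univ \ betaOp D (Xseq D lam)) := by
  classical
  obtain ⟨hfix, hleast⟩ := hI
  have hfin : ∀ r ∈ D.rules, r.body.Finite := hwf.2.2.1
  have hfinβ : ∀ S : Set (Lit A), ∀ r ∈ betaReduct D S, r.body.Finite :=
    fun S r hr => hfin r (betaReduct_subset_rules D S hr)
  set T : Set (Lit A) := Xseq D lam with hT
  have hTfix : T = betaOp D (betaOp D T) := by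
    have := hlam.1
    rw [Set.mem_setOf_eq, Xseq_succ] at this
    exact this
  -- the components of the fixpoint condition for I
  have hTD : TD D I = I.1 := congrArg Prod.fst hfix
  have hUN : UN D I = I.2 := congrArg Prod.snd hfix
  have hTD' : TRstep (betaReduct D (Set.univ \ I.2)) I.1 = I.1 := by
    rw [← TD_eq]
    rw [show ((I.1, I.2) : Interp (Lit A)) = I from rfl]
    exact hTD
  -- univ \ β(I.1) ⊆ I.2
  have hG : Set.univ \ betaOp D I.1 ⊆ I.2 := by
    rw [← hUN]
    exact fun x hx => ⟨Set.univ \ betaOp D I.1, compl_betaOp_unfounded D hfin I, hx⟩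
  have hGc : Set.univ \ I.2 ⊆ betaOp D I.1 := by
    intro x hx
    by_contra hxn
    exact hx.2 (hG ⟨trivial, hxn⟩)
  -- transfinite induction: X_o ⊆ I.1
  have hXle : ∀ o : Ordinal, Xseq D o ⊆ I.1 := by
    intro o
    induction o using Ordinal.limitRecOn with
    | zero => rw [Xseq_zero]; exact Set.empty_subset _
    | add_one o ih =>
      rw [Xseq_succ]
      have h1 : Set.univ \ I.2 ⊆ betaOp D (Xseq D o) :=
        hGc.trans (betaOp_antitone D ih)
      calc betaOp D (betaOp D (Xseq D o))
          ⊆ ClR (betaReduct D (Set.univ \ I.2)) := ClR_mono (betaReduct_antitone D h1)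
        _ ⊆ I.1 := ClR_le_closed (subset_of_eq hTD')
    | limit o ho ih =>
      rw [Xseq_limit D ho]
      exact Set.iUnion_subset fun x => ih x.1 x.2
  -- the candidate fixpoint J
  set J : Interp (Lit A) := (T, Set.univ \ betaOp D T) with hJ
  -- first component of WN D J
  have hJ1 : TD D J = T := by
    have hcompl : Set.univ \ (Set.univ \ betaOp D T) = betaOp D T := by
      rw [← Set.compl_eq_univ_diff, ← Set.compl_eq_univ_diff, compl_compl]
    have : TD D J = TRstep (betaReduct D (betaOp D T)) T := by
      rw [show J = (T, Set.univ \ betaOp D T) from rfl, TD_eq, hcompl]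
    rw [this]
    have hkey : TRstep (betaReduct D (betaOp D T)) (betaOp D (betaOp D T)) =
        betaOp D (betaOp D T) := ClR_fixed (hfinβ _)
    rw [← hTfix] at hkey
    exact hkey
  -- second component of WN D J
  have hJ2 : UN D J = Set.univ \ betaOp D T := by
    apply Set.Subset.antisymm
    · -- UN D J ⊆ univ \ β(T) : every element of UN D J is outside β(T)
      have hiter : ∀ n : ℕ, ∀ p ∈ TRiter (betaReduct D T) n, p ∉ UN D J := by
        intro n
        induction n with
        | zero => intro p hp; exact absurd hp (Set.notMem_empty p)
        | succ n ih =>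
          rintro p ⟨r, hr, hh, hb⟩ hpU
          have hU := UN_unfounded D J p hpU
          have hbβ : r.body ⊆ betaOp D T := hb.trans (TRiter_le_ClR _ n)
          have hcontra : ¬ (r.body ∩ (J.2 ∪ UN D J)).Nonempty := by
            rintro ⟨x, hx1, hx2⟩
            rcases hx2 with hx2 | hx2
            · exact hx2.2 (hbβ hx1)
            · exact ih x (hb hx1) hx2
          rcases hr with hrs | ⟨hrd, hcond⟩
          · exact hcontra (hU.1 r hrs hh)
          · rcases hU.2 r hrd hh with hne | ⟨c, hc, hpc, hdef⟩
            · exact hcontra hne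
            · rw [← hh] at hpc hdef
              obtain ⟨q, hq, hall⟩ := hcond c hc hpc
              obtain ⟨s, hs, hsq, hsb, hsp⟩ := hdef q hq
              rcases hall s hs hsq with hn | hp'
              · exact hn hsb
              · exact hsp hp'
      intro p hp
      refine ⟨trivial, fun hpβ => ?_⟩
      obtain ⟨n, hn⟩ := Set.mem_iUnion.1 hpβ
      exact hiter n p hn hp
    · -- univ \ β(T) ⊆ UN D J since it is unfounded
      intro x hx
      exact ⟨Set.univ \ betaOp D J.1, compl_betaOp_unfounded D hfin J, hx⟩
  -- J is a fixpoint of WN D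
  have hJfix : WN D J = J := by
    rw [WN, hJ1, hJ2]
  -- I ≤ J from leastness, J ≤ I from hXle
  obtain ⟨hIJ1, hIJ2⟩ := hleast J hJfix
  have hJI1 : J.1 ⊆ I.1 := hXle lam
  have hJI2 : J.2 ⊆ I.2 := by
    have hβ : betaOp D I.1 ⊆ betaOp D T := betaOp_antitone D hJI1
    intro x hx
    exact hG ⟨trivial, fun hxβ => hx.2 (hβ hxβ)⟩
  have h1 : I.1 = T := Set.Subset.antisymm hIJ1 hJI1
  have h2 : I.2 = Set.univ \ betaOp D T := Set.Subset.antisymm hIJ2 hJI2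
  exact Prod.ext h1 h2

end DLWFS
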